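/- In the byte-granularity model, applying a list of partial-write records to the disk page, where the disk page equals the result of applying an earlier prefix of the same record sequence to an initial page, yields the same final page as applying the entire record sequence to the initial page; i.e., replaying records that were already incorporated into the disk snapshot is idempotent with respect to the final page contents. -/

import Mathlib

/- Byte-granularity model: a page is a function from offsets to bytes; a
   record is a partial overwrite (off, len, data) within the page. -/

/-- A page of `n` bytes. -/
abbrev Page (n : ℕ) := Fin n → UInt8

/-- A partial-write record: bytes `[off, off+len)` get `data 0, …, data (len-1)`. -/
structure Rec (n : ℕ) where
  off  : ℕ
  len  : ℕ
  data : ℕ → UInt8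
  wf   : off + len ≤ n

/-- `r` covers offset `i`. -/
def covers {n : ℕ} (r : Rec n) (i : Fin n) : Prop :=
  r.off ≤ i.val ∧ i.val < r.off + r.len

/-- Apply one partial-write record to a page. -/
def applyRec {n : ℕ} (r : Rec n) (p : Page n) : Page n := fun i =>
  if r.off ≤ i.val ∧ i.val < r.off + r.len then r.data (i.val - r.off) else p i

/-- Apply a list of records in order (sequential overwrite application). -/
def applyRecs {n : ℕ} (rs : List (Rec n)) (p : Page n) : Page n :=
  rs.foldl (fun p r => applyRec r p) p

/-- Applying a suffix of records to a disk snapshot obtained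
    by applying the prefix equals applying the entire sequence to the initial
    page; moreover replaying records already incorporated in the snapshot is
    idempotent: `apply rs (apply rs p) = apply rs p`. -/
lemma applyRecs_not_covered {n : ℕ} (rs : List (Rec n)) (p : Page n) (i : Fin n)
    (h : ∀ r ∈ rs, ¬ covers r i) : applyRecs rs p i = p i := by
  induction rs generalizing p with
  | nil => rfl
  | cons r t ih =>
    have := ih (applyRec r p) (fun r' hr' => h r' (List.mem_cons_of_mem _ hr'))
    simp only [applyRecs, List.foldl_cons] at *
    rw [this, applyRec]; exact if_neg (h r List.mem_cons_self)

lemma applyRecs_covered {n : ℕ} (rs : List (Rec n)) (p q : Page n) (i : Fin n)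
    (h : ∃ r ∈ rs, covers r i) : applyRecs rs p i = applyRecs rs q i := by
  induction rs generalizing p q with
  | nil => simp at h
  | cons r t ih =>
    simp only [applyRecs, List.foldl_cons]
    by_cases ht : ∃ r' ∈ t, covers r' i
    · exact ih _ _ ht
    · push_neg at ht
      have hr : covers r i := by
        rcases h with ⟨r', hr', hc⟩
        rcases List.mem_cons.1 hr' with rfl | hm
        · exact hc
        · exact absurd hc (ht _ hm)
      rw [show (t.foldl (fun p r => applyRec r p) (applyRec r p)) i
            = applyRecs t (applyRec r p) i from rfl,
          show (t.foldl (fun p r => applyRec r p) (applyRec r q)) i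
            = applyRecs t (applyRec r q) i from rfl,
          applyRecs_not_covered t _ i ht, applyRecs_not_covered t _ i ht,
          applyRec, applyRec, if_pos (show r.off ≤ i.val ∧ i.val < r.off + r.len from hr), if_pos (show r.off ≤ i.val ∧ i.val < r.off + r.len from hr)]

theorem replay_prefix_and_idempotence :
    (∀ (n : ℕ) (p₀ : Page n) (rs₁ rs₂ : List (Rec n)),
      applyRecs rs₂ (applyRecs rs₁ p₀) = applyRecs (rs₁ ++ rs₂) p₀) ∧
    (∀ (n : ℕ) (rs : List (Rec n)) (p : Page n),
      applyRecs rs (applyRecs rs p) = applyRecs rs p) := by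
  constructor
  · intro n p₀ rs₁ rs₂
    simp [applyRecs, List.foldl_append]
  · intro n rs p
    funext i
    by_cases h : ∃ r ∈ rs, covers r i
    · exact applyRecs_covered rs _ p i h
    · push_neg at h
      exact applyRecs_not_covered rs _ i h
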